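/- Let H ≤ A × B be a subgroup of a direct product of groups with projections π_A, π_B, and let A₀ = A ∩ H and B₀ = B ∩ H (identifying A with A × {1} and B with {1} × B). Then [π_A(H), A₀] × [π_B(H), B₀] ≤ [H, H] ≤ H ∩ ([π_A(H), π_A(H)] × [π_B(H), π_B(H)]). -/

import Mathlib

/-- for a subgroup `H ≤ A × B`, with `A₀ = A ∩ H` and `B₀ = B ∩ H`
(viewed inside `A` resp. `B` via the identifications `A = A × {1}`, `B = {1} × B`,
i.e. as pullbacks of `H` along the canonical embeddings), we have
`[π_A(H), A₀] × [π_B(H), B₀] ≤ [H, H] ≤ H ∩ ([π_A(H), π_A(H)] × [π_B(H), π_B(H)])`. -/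
theorem stmt12 {A B : Type*} [Group A] [Group B] (H : Subgroup (A × B)) :
    (⁅H.map (MonoidHom.fst A B), H.comap (MonoidHom.inl A B)⁆.prod
        ⁅H.map (MonoidHom.snd A B), H.comap (MonoidHom.inr A B)⁆ ≤ ⁅H, H⁆) ∧
    ⁅H, H⁆ ≤ H ⊓
      (⁅H.map (MonoidHom.fst A B), H.map (MonoidHom.fst A B)⁆.prod
        ⁅H.map (MonoidHom.snd A B), H.map (MonoidHom.snd A B)⁆) := by
  constructor
  · have hA : (⁅H.map (MonoidHom.fst A B), H.comap (MonoidHom.inl A B)⁆).map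
        (MonoidHom.inl A B) ≤ ⁅H, H⁆ := by
      rw [Subgroup.map_commutator]
      rw [Subgroup.commutator_le]
      rintro p hp q hq
      rcases Subgroup.mem_map.1 hp with ⟨a, ha, rfl⟩
      rcases Subgroup.mem_map.1 ha with ⟨⟨a', b⟩, hab, rfl⟩
      rcases Subgroup.mem_map.1 hq with ⟨a₀, ha₀, rfl⟩
      have h1 : ((a₀, 1) : A × B) ∈ H := Subgroup.mem_comap.1 ha₀
      open scoped commutatorElement in
      have : ⁅((a', b) : A × B), ((a₀, 1) : A × B)⁆ =
          ⁅((MonoidHom.inl A B) ((MonoidHom.fst A B) (a', b)), (1 : B)).1,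
            ((a₀ : A), (1 : B))⁆ := by
        simp [commutatorElement_def, Prod.ext_iff, mul_assoc]
      open scoped commutatorElement in
      have key : ⁅((MonoidHom.inl A B) ((MonoidHom.fst A B) (a', b))),
          ((MonoidHom.inl A B) a₀)⁆ = ⁅((a', b) : A × B), ((a₀, 1) : A × B)⁆ := by
        simp [commutatorElement_def, Prod.ext_iff]
      rw [key]
      exact Subgroup.commutator_mem_commutator hab h1
    have hB : (⁅H.map (MonoidHom.snd A B), H.comap (MonoidHom.inr A B)⁆).map
        (MonoidHom.inr A B) ≤ ⁅H, H⁆ := by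
      rw [Subgroup.map_commutator]
      rw [Subgroup.commutator_le]
      rintro p hp q hq
      rcases Subgroup.mem_map.1 hp with ⟨b, hb, rfl⟩
      rcases Subgroup.mem_map.1 hb with ⟨⟨a, b'⟩, hab, rfl⟩
      rcases Subgroup.mem_map.1 hq with ⟨b₀, hb₀, rfl⟩
      have h1 : ((1, b₀) : A × B) ∈ H := Subgroup.mem_comap.1 hb₀
      open scoped commutatorElement in
      have key : ⁅((MonoidHom.inr A B) ((MonoidHom.snd A B) (a, b'))),
          ((MonoidHom.inr A B) b₀)⁆ = ⁅((a, b') : A × B), ((1, b₀) : A × B)⁆ := by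
        simp [commutatorElement_def, Prod.ext_iff]
      rw [key]
      exact Subgroup.commutator_mem_commutator hab h1
    rintro ⟨x, y⟩ ⟨hx, hy⟩
    have e : ((x, y) : A × B) = (x, 1) * (1, y) := by simp
    rw [e]
    exact mul_mem (hA ⟨x, hx, rfl⟩) (hB ⟨y, hy, rfl⟩)
  · refine le_inf ?_ ?_
    · rw [Subgroup.commutator_le]
      intro p hp q hq
      exact mul_mem (mul_mem (mul_mem hp hq) (inv_mem hp)) (inv_mem hq)
    · intro x hx
      refine ⟨?_, ?_⟩
      · rw [← Subgroup.map_commutator]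
        exact ⟨x, hx, rfl⟩
      · rw [← Subgroup.map_commutator]
        exact ⟨x, hx, rfl⟩
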